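/- arXiv:2005.07568 — 2 statements merged into one kernel-verified Lean document; each statement's English description precedes it below -/
import Mathlib

section
/- If two cDGs containing all loops are Markov equivalent, then they have the same directed edges and the same maximal virtual collider tripaths. -/
universe u

/-- A directed correlation graph (cDG): directed edges (loops allowed) and
blunt edges (symmetric, no loops). -/
structure CDG (V : Type u) where
  dir : V → V → Prop
  blunt : V → V → Prop
  blunt_symm : ∀ a b, blunt a b → blunt b a
  blunt_irrefl : ∀ a, ¬ blunt a a

namespace CDG

variable {V : Type u}

/-- `anc D a b` : `a` is an ancestor of `b` (directed path from `a` to `b`;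
every node is its own ancestor). -/
def anc (D : CDG V) (a b : V) : Prop := Relation.ReflTransGen D.dir a b

/-- `an(C)`: the set of ancestors of `C`. -/
def ancSet (D : CDG V) (C : Set V) : Set V := {a | ∃ c ∈ C, D.anc a c}

/-- An edge instance between `a` and `b`, with its orientation. -/
inductive Edge (D : CDG V) : V → V → Type u
  | fwd {a b : V} : D.dir a b → Edge D a b
  | bwd {a b : V} : D.dir b a → Edge D a b
  | bl  {a b : V} : D.blunt a b → Edge D a b

/-- The edge has a neck (head or stump) at its left endpoint. -/
def Edge.neckLeft {D : CDG V} {a b : V} : D.Edge a b → Prop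
  | .fwd _ => False
  | .bwd _ => True
  | .bl _ => True

/-- The edge has a neck (head or stump) at its right endpoint. -/
def Edge.neckRight {D : CDG V} {a b : V} : D.Edge a b → Prop
  | .fwd _ => True
  | .bwd _ => False
  | .bl _ => True

/-- The edge has a head (arrowhead) at its right endpoint. -/
def Edge.headRight {D : CDG V} {a b : V} : D.Edge a b → Prop
  | .fwd _ => True
  | _ => False

/-- The edge is a blunt edge. -/
def Edge.isBlunt {D : CDG V} {a b : V} : D.Edge a b → Prop
  | .bl _ => True
  | _ => False

/-- A walk from `a` to `b` in `D`. -/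
inductive Walk (D : CDG V) : V → V → Type u
  | nil (a : V) : Walk D a a
  | cons {a m c : V} : D.Edge a m → Walk D m c → Walk D a c

namespace Walk

variable {D : CDG V}

def length : ∀ {a b : V}, D.Walk a b → ℕ
  | _, _, .nil _ => 0
  | _, _, .cons _ w => w.length + 1

def support : ∀ {a b : V}, D.Walk a b → List V
  | a, _, .nil _ => [a]
  | a, _, .cons _ w => a :: w.support

/-- The list of nonendpoint (internal) node instances of a walk. -/
def internal : ∀ {a b : V}, D.Walk a b → List V
  | _, _, .nil _ => []
  | _, _, .cons _ (.nil _) => []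
  | _, _, .cons (m := m) _ w => m :: w.internal

/-- The final edge of the walk has a head at the terminal node. -/
def lastHead : ∀ {a b : V}, D.Walk a b → Prop
  | _, _, .nil _ => False
  | _, _, .cons e (.nil _) => e.headRight
  | _, _, .cons _ w => w.lastHead

/-- Every collider on the walk is in `an(C)` and no noncollider is in `C`. -/
def mOpen (C : Set V) : ∀ {a b : V}, D.Walk a b → Prop
  | _, _, .nil _ => True
  | _, _, .cons _ (.nil _) => True
  | _, _, .cons (m := m) e₁ (.cons e₂ w) =>
      ((e₁.neckRight ∧ e₂.neckLeft) → m ∈ D.ancSet C) ∧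
      (¬ (e₁.neckRight ∧ e₂.neckLeft) → m ∉ C) ∧
      mOpen C (Walk.cons e₂ w)

/-- Every nonendpoint node of the walk is a collider. -/
def allColliders : ∀ {a b : V}, D.Walk a b → Prop
  | _, _, .nil _ => True
  | _, _, .cons _ (.nil _) => True
  | _, _, .cons e₁ (.cons e₂ w) =>
      e₁.neckRight ∧ e₂.neckLeft ∧ allColliders (Walk.cons e₂ w)

/-- Every edge of the walk is blunt. -/
def allBlunt : ∀ {a b : V}, D.Walk a b → Prop
  | _, _, .nil _ => True
  | _, _, .cons e w => e.isBlunt ∧ w.allBlunt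

end Walk

/-- There is a μ-connecting walk from `a` to `b` given `C`. -/
def muConn (D : CDG V) (C : Set V) (a b : V) : Prop :=
  a ∉ C ∧ ∃ w : D.Walk a b, w.mOpen C ∧ w.lastHead

/-- `B` is μ-separated from `A` given `C`. -/
def muSep (D : CDG V) (A B C : Set V) : Prop :=
  ∀ a ∈ A, ∀ b ∈ B, ¬ D.muConn C a b

/-- The independence model of `D`: all μ-separation triples. -/
def indep (D : CDG V) : Set (Set V × Set V × Set V) :=
  {p | D.muSep p.1 p.2.1 p.2.2}

/-- A (nontrivial) collider path. -/
def IsColliderPath {D : CDG V} {a b : V} (w : D.Walk a b) : Prop :=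
  0 < w.length ∧ w.support.Nodup ∧ w.allColliders

/-- `a` and `b` are collider connected: some nontrivial walk between them has
every nonendpoint node a collider. -/
def colliderConn (D : CDG V) (a b : V) : Prop :=
  ∃ w : D.Walk a b, 0 < w.length ∧ w.allColliders

/-- A weak inducing path from `a` to `b`: a collider path whose nonendpoint
nodes are all ancestors of `a` or of `b`. -/
def WeakInducing (D : CDG V) (a b : V) : Prop :=
  ∃ w : D.Walk a b, IsColliderPath w ∧ ∀ m ∈ w.internal, D.anc m a ∨ D.anc m b

/-- A weak inducing path between `a` and `b` (in either direction). -/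
def WeakInducingBetween (D : CDG V) (a b : V) : Prop :=
  D.WeakInducing a b ∨ D.WeakInducing b a

end CDG

/-- The strongly connected component of `v`. -/
def CDG.scc {V : Type} (D : CDG V) (v : V) : Set V :=
  {w | D.anc v w ∧ D.anc w v}

/-- `C` is a strongly connected component of `D`. -/
def CDG.IsSCC {V : Type} (D : CDG V) (C : Set V) : Prop := ∃ v, C = D.scc v

/-- The edge relation of the condensation 𝒞(D). -/
def CDG.condEdge {V : Type} (D : CDG V) (C₁ C₂ : Set V) : Prop :=
  D.IsSCC C₁ ∧ D.IsSCC C₂ ∧ C₁ ≠ C₂ ∧ ∃ a ∈ C₁, ∃ b ∈ C₂, D.dir a b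

/-- The edge relation of the completed condensation: the condensation together
with an extra node ∅ which is a parent of every component. -/
def CDG.ccEdge {V : Type} (D : CDG V) (C₁ C₂ : Set V) : Prop :=
  D.condEdge C₁ C₂ ∨ (C₁ = ∅ ∧ D.IsSCC C₂)

/-- `(α,β,C)` is a virtual collider tripath. -/
def CDG.VCT {V : Type} (D : CDG V) (α β : V) (C : Set V) : Prop :=
  (D.IsSCC C ∨ C = ∅) ∧
  ∃ w : D.Walk α β, CDG.IsColliderPath w ∧
    ∀ m ∈ w.internal, m ∈ D.ancSet ({α, β} ∪ C)

/-- `(α,β,C)` is a maximal virtual collider tripath. -/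
def CDG.MaxVCT {V : Type} (D : CDG V) (α β : V) (C : Set V) : Prop :=
  D.VCT α β C ∧
  ¬ ∃ C' : Set V, C' ≠ C ∧ D.VCT α β C' ∧ Relation.ReflTransGen D.ccEdge C' C

section Aux

namespace CDG

variable {V : Type} {D : CDG V}

lemma Edge.dir_of_headRight {a b : V} {e : D.Edge a b} (h : e.headRight) : D.dir a b := by
  cases e with
  | fwd h' => exact h'
  | bwd _ => exact h.elim
  | bl _ => exact h.elim

lemma Edge.not_neckLeft_of_headRight {a b : V} {e : D.Edge a b} (h : e.headRight) :
    ¬ e.neckLeft := by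
  cases e with
  | fwd h' => exact fun hc => hc
  | bwd _ => exact h.elim
  | bl _ => exact h.elim

lemma Edge.dir_of_not_neckLeft {a b : V} {e : D.Edge a b} (h : ¬ e.neckLeft) : D.dir a b := by
  cases e with
  | fwd h' => exact h'
  | bwd _ => exact absurd trivial h
  | bl _ => exact absurd trivial h

lemma Edge.neckRight_of_not_neckLeft {a b : V} {e : D.Edge a b} (h : ¬ e.neckLeft) :
    e.neckRight := by
  cases e with
  | fwd h' => exact trivial
  | bwd _ => exact absurd trivial h
  | bl _ => exact absurd trivial h

lemma Edge.dir_rev_of_not_neckRight {a b : V} {e : D.Edge a b} (h : ¬ e.neckRight) :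
    D.dir b a := by
  cases e with
  | fwd h' => exact absurd trivial h
  | bwd h' => exact h'
  | bl _ => exact absurd trivial h

namespace Walk

/-- The first edge has a neck (head or stump) at the start node. -/
def firstNeckLeft : ∀ {a b : V}, D.Walk a b → Prop
  | _, _, .nil _ => True
  | _, _, .cons e _ => e.neckLeft

lemma length_cons {a m b : V} (e : D.Edge a m) (w : D.Walk m b) :
    (Walk.cons e w).length = w.length + 1 := rfl

lemma internal_cons {a m b : V} (e : D.Edge a m) (w : D.Walk m b) (h : 0 < w.length) :
    (Walk.cons e w).internal = m :: w.internal := by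
  cases w with
  | nil => simp [Walk.length] at h
  | cons e' w' => rfl

lemma allColliders_cons {a m b : V} (e : D.Edge a m) (w : D.Walk m b) (h : 0 < w.length) :
    (Walk.cons e w).allColliders ↔ e.neckRight ∧ w.firstNeckLeft ∧ w.allColliders := by
  cases w with
  | nil => simp [Walk.length] at h
  | cons e' w' => exact Iff.rfl

lemma support_eq : ∀ {a b : V} (w : D.Walk a b), 0 < w.length →
    w.support = a :: (w.internal ++ [b])
  | _, _, .nil _, h => by simp [Walk.length] at h
  | _, _, .cons e (.nil _), _ => rfl
  | a, b, .cons e₁ (.cons e₂ w'), _ => by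
      have ih := support_eq (Walk.cons e₂ w') (Nat.succ_pos _)
      show a :: (Walk.cons e₂ w').support = _
      rw [ih]
      rfl

lemma lastHead_len0 {a m b : V} (e : D.Edge a m) (w : D.Walk m b) (h : w.length = 0)
    (hl : (Walk.cons e w).lastHead) : e.headRight := by
  cases w with
  | nil => exact hl
  | cons e' w' => simp [Walk.length] at h

/-- Append one edge at the end of a walk. -/
def concat : ∀ {a b c : V}, D.Walk a b → D.Edge b c → D.Walk a c
  | _, _, _, .nil _, e => .cons e (.nil _)
  | _, _, _, .cons e' w, e => .cons e' (w.concat e)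

lemma lastHead_concat : ∀ {a b c : V} (w : D.Walk a b) (e : D.Edge b c),
    e.headRight → (w.concat e).lastHead
  | _, _, _, .nil _, e, he => he
  | _, _, _, .cons e' (.nil _), e, he => he
  | _, _, _, .cons e' (.cons e'' w'), e, he =>
      lastHead_concat (Walk.cons e'' w') e he

lemma mOpen_concat {X : Set V} : ∀ {a b c : V} (w : D.Walk a b) (e : D.Edge b c),
    ¬ e.neckLeft → b ∉ X → w.mOpen X → (w.concat e).mOpen X
  | _, _, _, .nil _, e, _, _, _ => trivial
  | _, _, _, .cons e' (.nil _), e, hne, hb, _ =>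
      ⟨fun hc => absurd hc.2 hne, fun _ => hb, trivial⟩
  | _, _, _, .cons e₁ (.cons e₂ w'), e, hne, hb, ho =>
      ⟨ho.1, ho.2.1, mOpen_concat (Walk.cons e₂ w') e hne hb ho.2.2⟩

lemma mOpen_of_allColliders {X : Set V} : ∀ {a b : V} (w : D.Walk a b),
    w.allColliders → (∀ m ∈ w.internal, m ∈ D.ancSet X) → w.mOpen X
  | _, _, .nil _, _, _ => trivial
  | _, _, .cons e (.nil _), _, _ => trivial
  | _, _, .cons e₁ (.cons e₂ w'), hc, hm =>
      ⟨fun _ => hm _ (List.mem_cons_self),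
       fun hnc => absurd ⟨hc.1, hc.2.1⟩ hnc,
       mOpen_of_allColliders (Walk.cons e₂ w') hc.2.2
         (fun x hx => hm x (List.mem_cons_of_mem _ hx))⟩

/-- From a μ-connecting walk, the last edge is directed into the endpoint,
from a node outside the conditioning set (or from the start if a single edge). -/
theorem lastEdge : ∀ {a b : V} {X : Set V} (w : D.Walk a b), w.mOpen X → w.lastHead →
    ∃ x, D.dir x b ∧ (x ∉ X ∨ (x = a ∧ w.length = 1))
  | _, _, _, .nil _, _, hl => hl.elim
  | a, _, _, .cons e (.nil _), _, hl =>
      ⟨a, Edge.dir_of_headRight hl, Or.inr ⟨rfl, rfl⟩⟩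
  | a, b, X, .cons e₁ (.cons e₂ w'), ho, hl => by
      obtain ⟨x, hx, hcase⟩ := lastEdge (Walk.cons e₂ w') ho.2.2 hl
      rcases hcase with hxh | ⟨hxm, hlen⟩
      · exact ⟨x, hx, Or.inl hxh⟩
      · have hw0 : w'.length = 0 := by
          simpa [Walk.length] using hlen
        have hh : e₂.headRight := lastHead_len0 e₂ w' hw0 hl
        have hm : _ ∉ X := ho.2.1 (fun hc => Edge.not_neckLeft_of_headRight hh hc.2)
        subst hxm
        exact ⟨x, hx, Or.inl hm⟩

end Walk

/-- Characterization of directed edges via μ-connectivity. -/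
theorem dir_iff_muConn (D : CDG V) (a b : V) :
    D.dir a b ↔ D.muConn (Set.univ \ {a}) a b := by
  constructor
  · intro hd
    exact ⟨by simp, Walk.cons (Edge.fwd hd) (Walk.nil b), trivial, trivial⟩
  · rintro ⟨-, w, ho, hl⟩
    obtain ⟨x, hx, hc⟩ := Walk.lastEdge w ho hl
    rcases hc with hxh | ⟨rfl, -⟩
    · have hxa : x = a := by
        by_contra hne
        exact hxh ⟨trivial, hne⟩
      exact hxa ▸ hx
    · exact hx

lemma muSep_singleton_iff {D : CDG V} {a b : V} {X : Set V} :
    D.muSep {a} {b} X ↔ ¬ D.muConn X a b := by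
  constructor
  · intro h
    exact h a rfl b rfl
  · intro h a' ha' b' hb'
    rw [Set.mem_singleton_iff] at ha' hb'
    subst ha'; subst hb'
    exact h

lemma muConn_transfer {D₁ D₂ : CDG V} (h : D₁.indep = D₂.indep) (X : Set V) (a b : V) :
    D₁.muConn X a b ↔ D₂.muConn X a b := by
  have h2 := Set.ext_iff.mp h ⟨{a}, {b}, X⟩
  simp only [CDG.indep, Set.mem_setOf_eq, muSep_singleton_iff] at h2
  exact not_iff_not.mp h2

lemma anc_mem_ancSet {S : Set V} {x y : V} (h : D.anc x y) (hy : y ∈ D.ancSet S) :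
    x ∈ D.ancSet S := by
  obtain ⟨c, hc, h2⟩ := hy
  exact ⟨c, hc, h.trans h2⟩

lemma mem_ancSet_self {S : Set V} {x : V} (hx : x ∈ S) : x ∈ D.ancSet S :=
  ⟨x, hx, Relation.ReflTransGen.refl⟩

lemma ancSet_diff_subset {S Z : Set V} : D.ancSet (D.ancSet S \ Z) ⊆ D.ancSet S := by
  rintro m ⟨c, hc, hmc⟩
  exact anc_mem_ancSet hmc hc.1

/-- Chasing a chain of forward edges: if the walk starts with a tail at `a`, then
`a` is an ancestor of a collider or of the end node. -/
theorem ancestor_of_not_neckLeft {S X : Set V} (hXS : D.ancSet X ⊆ D.ancSet S) :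
    ∀ {a m b : V} (e : D.Edge a m) (w : D.Walk m b),
      (Walk.cons e w).mOpen X → ¬ e.neckLeft → b ∈ D.ancSet S → a ∈ D.ancSet S
  | _, _, _, e, .nil _, _, hne, hb =>
      anc_mem_ancSet (Relation.ReflTransGen.single (Edge.dir_of_not_neckLeft hne)) hb
  | a, m, b, e, .cons e₂ w', ho, hne, hb => by
      have hdir : D.dir a m := Edge.dir_of_not_neckLeft hne
      by_cases hnl2 : e₂.neckLeft
      · have hcol : m ∈ D.ancSet X := ho.1 ⟨Edge.neckRight_of_not_neckLeft hne, hnl2⟩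
        exact anc_mem_ancSet (Relation.ReflTransGen.single hdir) (hXS hcol)
      · have hm := ancestor_of_not_neckLeft hXS e₂ w' ho.2.2 hnl2 hb
        exact anc_mem_ancSet (Relation.ReflTransGen.single hdir) hm

/-- Scanning a μ-connecting walk: either we find a strictly shorter μ-connecting
walk, or an initial segment which is a nontrivial collider walk whose internal
nodes are in `an(S)` and avoid `α`, `β`. -/
theorem scan (D : CDG V) (α β : V) (S : Set V)
    (hβS : β ∈ D.ancSet S) :
    ∀ {a : V} (w : D.Walk a β),
      w.mOpen (D.ancSet S \ {α, β}) → w.lastHead → a ∈ D.ancSet S →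
      (∃ v : D.Walk α β, v.length < w.length ∧
          v.mOpen (D.ancSet S \ {α, β}) ∧ v.lastHead) ∨
      (∃ v : D.Walk a β, 0 < v.length ∧ v.allColliders ∧
          (∀ m ∈ v.internal, m ∈ D.ancSet S ∧ m ≠ α ∧ m ≠ β) ∧
          (w.firstNeckLeft → v.firstNeckLeft))
  | _, .nil _, _, hl, _ => hl.elim
  | a, .cons e (.nil _), _, _, _ =>
      Or.inr ⟨Walk.cons e (Walk.nil _), Nat.one_pos, trivial,
        fun m hm => absurd hm List.not_mem_nil, fun h => h⟩
  | a, .cons (m := m) e₁ (.cons e₂ w'), ho, hl, ha => by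
      by_cases hmα : m = α
      · subst hmα
        exact Or.inl ⟨Walk.cons e₂ w', Nat.lt_succ_self _, ho.2.2, hl⟩
      by_cases hmβ : m = β
      · subst hmβ
        exact Or.inr ⟨Walk.cons e₁ (Walk.nil m), Nat.one_pos, trivial,
          fun x hx => absurd hx List.not_mem_nil, fun h => h⟩
      by_cases hcol : e₁.neckRight ∧ e₂.neckLeft
      · have hmS : m ∈ D.ancSet S := ancSet_diff_subset (ho.1 hcol)
        rcases scan D α β S hβS (Walk.cons e₂ w') ho.2.2 hl hmS with
          ⟨v, hlt, hmo, hlh⟩ | ⟨v, hpos, hcols, hint, hfnl⟩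
        · exact Or.inl ⟨v, hlt.trans (Nat.lt_succ_self _), hmo, hlh⟩
        · refine Or.inr ⟨Walk.cons e₁ v, Nat.succ_pos _, ?_, ?_, fun h => h⟩
          · rw [Walk.allColliders_cons _ _ hpos]
            exact ⟨hcol.1, hfnl hcol.2, hcols⟩
          · rw [Walk.internal_cons _ _ hpos]
            intro x hx
            rcases List.mem_cons.mp hx with rfl | hx
            · exact ⟨hmS, hmα, hmβ⟩
            · exact hint x hx
      · exfalso
        have hmX : m ∉ (D.ancSet S \ {α, β}) := ho.2.1 hcol
        have hmS : m ∈ D.ancSet S := by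
          by_cases hnl2 : e₂.neckLeft
          · have hnr : ¬ e₁.neckRight := fun hh => hcol ⟨hh, hnl2⟩
            exact anc_mem_ancSet
              (Relation.ReflTransGen.single (Edge.dir_rev_of_not_neckRight hnr)) ha
          · exact ancestor_of_not_neckLeft ancSet_diff_subset e₂ w' ho.2.2 hnl2 hβS
        exact hmX ⟨hmS, by simp [hmα, hmβ]⟩

/-- Any μ-connecting walk from `α` to `β` yields a nontrivial collider walk whose
internal nodes lie in `an(S)` and avoid `α`, `β`. -/
theorem toColliderWalk (D : CDG V) (α β : V) (S : Set V)
    (hαS : α ∈ D.ancSet S) (hβS : β ∈ D.ancSet S) :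
    ∀ (n : ℕ) (w : D.Walk α β), w.length ≤ n →
      w.mOpen (D.ancSet S \ {α, β}) → w.lastHead →
      ∃ v : D.Walk α β, 0 < v.length ∧ v.allColliders ∧
        ∀ m ∈ v.internal, m ∈ D.ancSet S ∧ m ≠ α ∧ m ≠ β := by
  intro n
  induction n with
  | zero =>
    intro w hle ho hl
    rcases scan D α β S hβS w ho hl hαS with ⟨v, hlt, _, _⟩ | ⟨v, hpos, hcols, hint, _⟩
    · omega
    · exact ⟨v, hpos, hcols, hint⟩
  | succ n ih =>
    intro w hle ho hl
    rcases scan D α β S hβS w ho hl hαS with ⟨v, hlt, hmo, hlh⟩ | ⟨v, hpos, hcols, hint, _⟩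
    · exact ih v (by omega) hmo hlh
    · exact ⟨v, hpos, hcols, hint⟩

/-- The suffix of a collider walk starting at any internal node. -/
theorem suffixAt : ∀ {a b : V} (v : D.Walk a b), v.allColliders → ∀ m, m ∈ v.internal →
    ∃ v' : D.Walk m b, 0 < v'.length ∧ v'.length < v.length ∧ v'.allColliders ∧
      v'.firstNeckLeft ∧ ∀ x ∈ v'.internal, x ∈ v.internal
  | _, _, .nil _, _, m, hm => absurd hm List.not_mem_nil
  | _, _, .cons _ (.nil _), _, m, hm => absurd hm List.not_mem_nil
  | a, b, .cons (m := m₁) e₁ (.cons e₂ w'), hc, m, hm => by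
      rcases List.mem_cons.mp hm with rfl | hm'
      · exact ⟨Walk.cons e₂ w', Nat.succ_pos _, Nat.lt_succ_self _, hc.2.2, hc.2.1,
          fun x hx => List.mem_cons_of_mem _ hx⟩
      · obtain ⟨v', h0, hlt, hcols, hfnl, hsub⟩ := suffixAt (Walk.cons e₂ w') hc.2.2 m hm'
        exact ⟨v', h0, hlt.trans (Nat.lt_succ_self _), hcols, hfnl,
          fun x hx => List.mem_cons_of_mem _ (hsub x hx)⟩

/-- If a collider walk has a repeated internal node, it can be shortened. -/
theorem dedupStep : ∀ {a b : V} (v : D.Walk a b), v.allColliders → ¬ v.internal.Nodup →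
    ∃ v' : D.Walk a b, 0 < v'.length ∧ v'.length < v.length ∧ v'.allColliders ∧
      (v.firstNeckLeft → v'.firstNeckLeft) ∧ ∀ x ∈ v'.internal, x ∈ v.internal
  | _, _, .nil _, _, hnd => absurd List.nodup_nil hnd
  | _, _, .cons _ (.nil _), _, hnd => absurd List.nodup_nil hnd
  | a, b, .cons (m := m₁) e₁ (.cons e₂ w'), hc, hnd => by
      by_cases hm : m₁ ∈ (Walk.cons e₂ w').internal
      · obtain ⟨v'', h0, hlt, hcols, hfnl, hsub⟩ := suffixAt (Walk.cons e₂ w') hc.2.2 m₁ hm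
        refine ⟨Walk.cons e₁ v'', Nat.succ_pos _, Nat.succ_lt_succ hlt, ?_, fun h => h, ?_⟩
        · rw [Walk.allColliders_cons _ _ h0]
          exact ⟨hc.1, hfnl, hcols⟩
        · rw [Walk.internal_cons _ _ h0]
          intro x hx
          show x ∈ m₁ :: (Walk.cons e₂ w').internal
          rcases List.mem_cons.mp hx with rfl | hx
          · exact List.mem_cons_self
          · exact List.mem_cons_of_mem _ (hsub x hx)
      · have hnd' : ¬ (Walk.cons e₂ w').internal.Nodup := by
          intro hn
          exact hnd (List.nodup_cons.mpr ⟨hm, hn⟩)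
        obtain ⟨v'', h0, hlt, hcols, hfnl, hsub⟩ := dedupStep (Walk.cons e₂ w') hc.2.2 hnd'
        refine ⟨Walk.cons e₁ v'', Nat.succ_pos _, Nat.succ_lt_succ hlt, ?_, fun h => h, ?_⟩
        · rw [Walk.allColliders_cons _ _ h0]
          exact ⟨hc.1, hfnl hc.2.1, hcols⟩
        · rw [Walk.internal_cons _ _ h0]
          intro x hx
          show x ∈ m₁ :: (Walk.cons e₂ w').internal
          rcases List.mem_cons.mp hx with rfl | hx
          · exact List.mem_cons_self
          · exact List.mem_cons_of_mem _ (hsub x hx)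

/-- Every nontrivial collider walk contains a nontrivial collider walk with
no repeated internal nodes. -/
theorem dedupAll : ∀ (n : ℕ) {a b : V} (v : D.Walk a b), v.length ≤ n → 0 < v.length →
    v.allColliders →
    ∃ v' : D.Walk a b, 0 < v'.length ∧ v'.allColliders ∧ v'.internal.Nodup ∧
      ∀ x ∈ v'.internal, x ∈ v.internal := by
  intro n
  induction n with
  | zero =>
    intro a b v hle h0 _
    exact absurd h0 (by omega)
  | succ n ih =>
    intro a b v hle h0 hc
    by_cases hnd : v.internal.Nodup
    · exact ⟨v, h0, hc, hnd, fun x hx => hx⟩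
    · obtain ⟨v', h0', hlt, hc', _, hsub⟩ := dedupStep v hc hnd
      obtain ⟨v'', h0'', hc'', hnd'', hsub''⟩ := ih v' (by omega) h0' hc'
      exact ⟨v'', h0'', hc'', hnd'', fun x hx => hsub x (hsub'' x hx)⟩

/-- Characterization of virtual collider tripaths via μ-connectivity. -/
theorem vct_iff (D : CDG V) (hloop : ∀ a, D.dir a a) {α β : V} (hαβ : α ≠ β) (C : Set V) :
    D.VCT α β C ↔ ((D.IsSCC C ∨ C = ∅) ∧
      D.muConn (D.ancSet ({α, β} ∪ C) \ {α, β}) α β) := by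
  have hαmem : α ∈ ({α, β} ∪ C : Set V) := Or.inl (Set.mem_insert _ _)
  have hβmem : β ∈ ({α, β} ∪ C : Set V) := Or.inl (Set.mem_insert_of_mem _ rfl)
  constructor
  · rintro ⟨hC, w, ⟨hpos, hnd, hcols⟩, hint⟩
    have hne : ∀ m ∈ w.internal, m ≠ α ∧ m ≠ β := by
      rw [Walk.support_eq w hpos] at hnd
      have h1 := (List.nodup_cons.mp hnd).1
      have h2 := (List.nodup_cons.mp hnd).2
      obtain ⟨-, -, hdisj⟩ := List.nodup_append'.mp h2
      intro m hm
      constructor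
      · intro hmα; subst hmα
        exact h1 (List.mem_append_left _ hm)
      · intro hmβ; subst hmβ
        exact hdisj hm (List.mem_singleton.mpr rfl)
    refine ⟨hC, by simp, w.concat (Edge.fwd (hloop β)), ?_, ?_⟩
    · refine Walk.mOpen_concat w _ (fun hf => hf) (by simp) ?_
      refine Walk.mOpen_of_allColliders w hcols ?_
      intro m hm
      exact mem_ancSet_self ⟨hint m hm, by simp [(hne m hm).1, (hne m hm).2]⟩
    · exact Walk.lastHead_concat w _ trivial
  · rintro ⟨hC, -, w, ho, hl⟩
    obtain ⟨v, hpos, hcols, hint⟩ :=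
      toColliderWalk D α β ({α, β} ∪ C) (mem_ancSet_self hαmem) (mem_ancSet_self hβmem)
        w.length w le_rfl ho hl
    obtain ⟨v', h0', hc', hnd', hsub'⟩ := dedupAll v.length v le_rfl hpos hcols
    have hint' : ∀ m ∈ v'.internal, m ∈ D.ancSet ({α, β} ∪ C) ∧ m ≠ α ∧ m ≠ β :=
      fun m hm => hint m (hsub' m hm)
    refine ⟨hC, v', ⟨h0', ?_, hc'⟩, fun m hm => (hint' m hm).1⟩
    rw [Walk.support_eq v' h0']
    refine List.nodup_cons.mpr ⟨?_, ?_⟩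
    · intro hmem
      rcases List.mem_append.mp hmem with hmem | hmem
      · exact (hint' α hmem).2.1 rfl
      · exact hαβ (List.mem_singleton.mp hmem)
    · refine List.nodup_append'.mpr ⟨hnd', List.nodup_singleton _, ?_⟩
      intro x hx hx'
      exact (hint' x hx).2.2 (List.mem_singleton.mp hx')

/-- No virtual collider tripath from a node to itself. -/
lemma not_vct_self (D : CDG V) (α : V) (C : Set V) : ¬ D.VCT α α C := by
  rintro ⟨-, w, ⟨hpos, hnd, -⟩, -⟩
  rw [Walk.support_eq w hpos] at hnd
  exact (List.nodup_cons.mp hnd).1 (List.mem_append_right _ (List.mem_singleton.mpr rfl))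

section Transfer

variable {D₁ D₂ : CDG V}

lemma dir_eq (h : D₁.indep = D₂.indep) : D₁.dir = D₂.dir := by
  funext a b
  exact propext ((dir_iff_muConn D₁ a b).trans
    ((muConn_transfer h _ a b).trans (dir_iff_muConn D₂ a b).symm))

lemma anc_eq (hd : D₁.dir = D₂.dir) : D₁.anc = D₂.anc := by
  unfold CDG.anc; rw [hd]

lemma ancSet_eq (hd : D₁.dir = D₂.dir) : D₁.ancSet = D₂.ancSet := by
  unfold CDG.ancSet; rw [anc_eq hd]

lemma scc_eq (hd : D₁.dir = D₂.dir) : D₁.scc = D₂.scc := by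
  unfold CDG.scc; rw [anc_eq hd]

lemma isSCC_eq (hd : D₁.dir = D₂.dir) : D₁.IsSCC = D₂.IsSCC := by
  unfold CDG.IsSCC; rw [scc_eq hd]

lemma ccEdge_eq (hd : D₁.dir = D₂.dir) : D₁.ccEdge = D₂.ccEdge := by
  unfold CDG.ccEdge CDG.condEdge; rw [isSCC_eq hd, hd]

lemma vct_eq (h1 : ∀ a, D₁.dir a a) (h2 : ∀ a, D₂.dir a a)
    (h : D₁.indep = D₂.indep) : D₁.VCT = D₂.VCT := by
  have hd := dir_eq h
  funext α β C
  refine propext ?_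
  by_cases hαβ : α = β
  · subst hαβ
    exact iff_of_false (not_vct_self D₁ α C) (not_vct_self D₂ α C)
  · rw [vct_iff D₁ h1 hαβ C, vct_iff D₂ h2 hαβ C, isSCC_eq hd, ancSet_eq hd]
    exact and_congr Iff.rfl (muConn_transfer h _ α β)

end Transfer

end CDG

end Aux

/-- Markov equivalent cDGs containing all loops have the same
directed edges and the same maximal virtual collider tripaths. -/
theorem stmt12 {V : Type} (D₁ D₂ : CDG V)
    (h1 : ∀ a, D₁.dir a a) (h2 : ∀ a, D₂.dir a a)
    (h : D₁.indep = D₂.indep) :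
    (∀ a b, D₁.dir a b ↔ D₂.dir a b) ∧
    (∀ (α β : V) (C : Set V), D₁.MaxVCT α β C ↔ D₂.MaxVCT α β C) := by
  have hd := CDG.dir_eq h
  constructor
  · intro a b
    rw [hd]
  · intro α β C
    unfold CDG.MaxVCT
    rw [CDG.vct_eq h1 h2 h, CDG.ccEdge_eq hd]
end

section
/- μ-separation in a cDG reduces to vertex separation in an augmented (moral) graph: B is μ-separated from A given C in D if and only if A∖C and the proxy set Bᵖ are separated by C in the augmentation of the induced subgraph of D(B) on an(A∪Bᵖ∪C), where D(B) adds for each βᵢ∈B a new node βᵢᵖ with edges α→βᵢᵖ whenever α→βᵢ in D. -/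
universe u

/-- The graph `D(B)`: `D` together with, for each β∈B, a proxy node βᵖ (the
right copy of β) with edges α → βᵖ exactly when α → β in `D`. -/
def CDG.proxy {V : Type} (D : CDG V) (B : Set V) : CDG (V ⊕ V) where
  dir x y :=
    match x, y with
    | Sum.inl a, Sum.inl b => D.dir a b
    | Sum.inl a, Sum.inr b => b ∈ B ∧ D.dir a b
    | _, _ => False
  blunt x y :=
    match x, y with
    | Sum.inl a, Sum.inl b => D.blunt a b
    | _, _ => False
  blunt_symm := by
    rintro (a | a) (b | b) h
    · exact D.blunt_symm a b h
    · exact h.elim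
    · exact h.elim
    · exact h.elim
  blunt_irrefl := by
    rintro (a | a) h
    · exact D.blunt_irrefl a h
    · exact h.elim

/-- The induced subgraph of `D` on the node set `A`. -/
def CDG.induce {V : Type} (D : CDG V) (A : Set V) : CDG V where
  dir a b := D.dir a b ∧ a ∈ A ∧ b ∈ A
  blunt a b := D.blunt a b ∧ a ∈ A ∧ b ∈ A
  blunt_symm := fun _ _ h => ⟨D.blunt_symm _ _ h.1, h.2.2, h.2.1⟩
  blunt_irrefl := fun a h => D.blunt_irrefl a h.1

/-- The adjacency relation of the augmented (moral) graph of a cDG: distinct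
collider connected nodes are joined. -/
def augAdj {W : Type} (D : CDG W) (x y : W) : Prop :=
  x ≠ y ∧ D.colliderConn x y

/-- Vertex separation in an undirected graph given by an adjacency relation:
`A` and `B` are separated by `C` if every path between them intersects `C`. -/
def udSep {W : Type} (adj : W → W → Prop) (A B C : Set W) : Prop :=
  ¬ ∃ a ∈ A, a ∉ C ∧ ∃ b ∈ B,
      Relation.ReflTransGen (fun x y => adj x y ∧ y ∉ C) a b

namespace CDG

variable {V : Type u} {D : CDG V}

namespace Edge

lemma dir_of_headRight_s14 {a b : V} (e : D.Edge a b) (h : e.headRight) : D.dir a b := by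
  cases e with
  | fwd h' => exact h'
  | bwd h' => exact absurd h (by simp [headRight])
  | bl h' => exact absurd h (by simp [headRight])

lemma dir_of_not_neckRight {a b : V} (e : D.Edge a b) (h : ¬ e.neckRight) : D.dir b a := by
  cases e with
  | fwd h' => exact absurd (by trivial : Edge.neckRight (.fwd h')) h
  | bwd h' => exact h'
  | bl h' => exact absurd (by trivial : Edge.neckRight (.bl h')) h

lemma headRight_of_not_neckLeft {a b : V} (e : D.Edge a b) (h : ¬ e.neckLeft) : e.headRight := by
  cases e with
  | fwd h' => trivial
  | bwd h' => exact absurd (by trivial : Edge.neckLeft (.bwd h')) h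
  | bl h' => exact absurd (by trivial : Edge.neckLeft (.bl h')) h

lemma neckRight_of_headRight {a b : V} (e : D.Edge a b) (h : e.headRight) : e.neckRight := by
  cases e with
  | fwd h' => trivial
  | bwd h' => exact absurd h (by simp [headRight])
  | bl h' => exact absurd h (by simp [headRight])

lemma not_neckLeft_of_headRight_s14 {a b : V} (e : D.Edge a b) (h : e.headRight) : ¬ e.neckLeft := by
  cases e with
  | fwd h' => simp [neckLeft]
  | bwd h' => exact absurd h (by simp [headRight])
  | bl h' => exact absurd h (by simp [headRight])

end Edge

namespace Walk

def append : ∀ {a b c : V}, D.Walk a b → D.Walk b c → D.Walk a c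
  | _, _, _, .nil _, w₂ => w₂
  | _, _, _, .cons e w, w₂ => .cons e (w.append w₂)

def snoc {a b c : V} (w : D.Walk a b) (e : D.Edge b c) : D.Walk a c :=
  w.append (.cons e (.nil c))

lemma length_append : ∀ {a b c : V} (w₁ : D.Walk a b) (w₂ : D.Walk b c),
    (w₁.append w₂).length = w₁.length + w₂.length
  | _, _, _, .nil _, w₂ => by simp [append, length]
  | _, _, _, .cons e w, w₂ => by
      simp [append, length, length_append w w₂]; omega

/-- last edge of the walk has a neck at the right end (`True` for trivial walks). -/
def lastNeck : ∀ {a b : V}, D.Walk a b → Prop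
  | _, _, .nil _ => True
  | _, _, .cons e (.nil _) => e.neckRight
  | _, _, .cons _ w => w.lastNeck

/-- first edge of the walk has a neck at the left end (`True` for trivial walks). -/
def firstNeckL : ∀ {a b : V}, D.Walk a b → Prop
  | _, _, .nil _ => True
  | _, _, .cons e _ => e.neckLeft

lemma eq_of_length_eq_zero : ∀ {a b : V} (w : D.Walk a b), w.length = 0 → a = b
  | _, _, .nil _, _ => rfl
  | _, _, .cons _ w, h => by simp [length] at h

lemma length_snoc_pos {a b c : V} (w : D.Walk a b) (e : D.Edge b c) :
    0 < (w.snoc e).length := by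
  cases w with
  | nil => simp [snoc, append, length]
  | cons e' w' => simp [snoc, append, length]

lemma lastHead_cons_of {a m b : V} (e : D.Edge a m) (w : D.Walk m b)
    (hpos : 0 < w.length) (h : w.lastHead) : (Walk.cons e w).lastHead := by
  cases w with
  | nil => simp [length] at hpos
  | cons e' w' => exact h

lemma lastHead_append : ∀ {a b c : V} (w₁ : D.Walk a b) (w₂ : D.Walk b c),
    0 < w₂.length → w₂.lastHead → (w₁.append w₂).lastHead
  | _, _, _, .nil _, w₂, _, h => h
  | _, _, _, .cons e w, w₂, hp, h => by
      have := lastHead_append w w₂ hp h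
      exact lastHead_cons_of e (w.append w₂)
        (by rw [length_append]; omega) this

lemma firstNeckL_append {a b c : V} (w₁ : D.Walk a b) (w₂ : D.Walk b c)
    (hp : 0 < w₁.length) (h : w₁.firstNeckL) : (w₁.append w₂).firstNeckL := by
  cases w₁ with
  | nil => simp [length] at hp
  | cons e w => exact h

lemma lastHead_snoc : ∀ {a b c : V} (w : D.Walk a b) (e : D.Edge b c),
    (w.snoc e).lastHead ↔ e.headRight
  | _, _, _, .nil _, e => Iff.rfl
  | _, _, _, .cons e' (.nil _), e => Iff.rfl
  | _, _, _, .cons e' (.cons e'' w), e => lastHead_snoc (Walk.cons e'' w) e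

lemma lastNeck_snoc : ∀ {a b c : V} (w : D.Walk a b) (e : D.Edge b c),
    (w.snoc e).lastNeck ↔ e.neckRight
  | _, _, _, .nil _, e => Iff.rfl
  | _, _, _, .cons e' (.nil _), e => Iff.rfl
  | _, _, _, .cons e' (.cons e'' w), e => lastNeck_snoc (Walk.cons e'' w) e

lemma allColliders_snoc : ∀ {a b c : V} (w : D.Walk a b) (e : D.Edge b c),
    w.allColliders → (w.length = 0 ∨ (w.lastNeck ∧ e.neckLeft)) →
    (w.snoc e).allColliders
  | _, _, _, .nil _, e, _, _ => trivial
  | _, _, _, .cons e' (.nil _), e, _, h => by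
      rcases h with h | h
      · simp [length] at h
      · exact ⟨h.1, h.2, trivial⟩
  | _, _, _, .cons e' (.cons e'' w), e, hc, h => by
      refine ⟨hc.1, hc.2.1, allColliders_snoc (Walk.cons e'' w) e hc.2.2 ?_⟩
      rcases h with h | h
      · simp [length] at h
      · exact Or.inr h

end Walk
end CDG
namespace CDG
variable {V : Type u} {D : CDG V}
namespace Walk

/-- generalized openness: colliders satisfy `K` (which may use whether the incoming
edge is an arrowhead), noncolliders avoid `NC`. -/
def jOpen (K : Prop → V → Prop) (NC : Set V) : ∀ {a b : V}, D.Walk a b → Prop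
  | _, _, .nil _ => True
  | _, _, .cons _ (.nil _) => True
  | _, _, .cons (m := m) e₁ (.cons e₂ w) =>
      ((e₁.neckRight ∧ e₂.neckLeft) → K e₁.headRight m) ∧
      (¬ (e₁.neckRight ∧ e₂.neckLeft) → m ∉ NC) ∧
      jOpen K NC (Walk.cons e₂ w)

lemma jOpen_tail {K : Prop → V → Prop} {NC : Set V} :
    ∀ {a m b : V} (e : D.Edge a m) (w : D.Walk m b),
    (Walk.cons e w).jOpen K NC → w.jOpen K NC
  | _, _, _, _, .nil _, _ => trivial
  | _, _, _, _, .cons _ _, h => h.2.2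

lemma lastNeck_of_lastHead : ∀ {a b : V} (w : D.Walk a b), w.lastHead → w.lastNeck
  | _, _, .nil _, h => h.elim
  | _, _, .cons e (.nil _), h => e.neckRight_of_headRight h
  | _, _, .cons e (.cons e' w), h => lastNeck_of_lastHead (Walk.cons e' w) h

lemma mOpen_of_jOpen {C : Set V} : ∀ {a b : V} (w : D.Walk a b),
    w.jOpen (fun _ m => m ∈ D.ancSet C) C → w.mOpen C
  | _, _, .nil _, _ => trivial
  | _, _, .cons _ (.nil _), _ => trivial
  | _, _, .cons e₁ (.cons e₂ w), h =>
      ⟨h.1, h.2.1, mOpen_of_jOpen (Walk.cons e₂ w) h.2.2⟩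

lemma jOpen_append {K : Prop → V → Prop} {NC : Set V} :
    ∀ {a m c : V} (w₁ : D.Walk a m) (w₂ : D.Walk m c),
    w₁.jOpen K NC → w₂.jOpen K NC →
    (0 < w₁.length → 0 < w₂.length →
      ((w₁.lastNeck ∧ w₂.firstNeckL) → K w₁.lastHead m) ∧
      (¬ (w₁.lastNeck ∧ w₂.firstNeckL) → m ∉ NC)) →
    (w₁.append w₂).jOpen K NC
  | _, _, _, .nil _, w₂, _, h₂, _ => h₂
  | _, _, _, .cons e (.nil _), w₂, _, h₂, hj => by
      cases w₂ with
      | nil => trivial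
      | cons e₂ w₂' =>
          refine ⟨?_, ?_, h₂⟩
          · exact fun h => (hj (by simp [length]) (by simp [length])).1 h
          · exact fun h => (hj (by simp [length]) (by simp [length])).2 h
  | _, _, _, .cons e (.cons e' w₁'), w₂, h₁, h₂, hj => by
      refine ⟨h₁.1, h₁.2.1, ?_⟩
      exact jOpen_append (Walk.cons e' w₁') w₂ h₁.2.2 h₂
        (fun _ h2 => hj (by simp [length]) h2)

/-- every edge is a forward (left-to-right directed) edge. -/
def AllFwd : ∀ {a b : V}, D.Walk a b → Prop
  | _, _, .nil _ => True
  | _, _, .cons e w => e.headRight ∧ w.AllFwd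

/-- every edge is a backward (right-to-left directed) edge. -/
def AllBwd : ∀ {a b : V}, D.Walk a b → Prop
  | _, _, .nil _ => True
  | _, _, .cons e w => (¬ e.neckRight) ∧ w.AllBwd

lemma jOpen_of_allFwd {K : Prop → V → Prop} {NC : Set V} :
    ∀ {a b : V} (w : D.Walk a b), w.AllFwd → (∀ v ∈ w.internal, v ∉ NC) →
    w.jOpen K NC
  | _, _, .nil _, _, _ => trivial
  | _, _, .cons _ (.nil _), _, _ => trivial
  | _, _, .cons e₁ (.cons e₂ w), hf, hn => by
      refine ⟨?_, ?_, jOpen_of_allFwd (Walk.cons e₂ w) hf.2 ?_⟩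
      · intro h
        exact absurd h.2 (Edge.not_neckLeft_of_headRight_s14 e₂ hf.2.1)
      · intro _
        exact hn _ (by simp [internal])
      · intro v hv
        exact hn v (by simp [internal]; exact Or.inr hv)

lemma jOpen_of_allBwd {K : Prop → V → Prop} {NC : Set V} :
    ∀ {a b : V} (w : D.Walk a b), w.AllBwd → (∀ v ∈ w.internal, v ∉ NC) →
    w.jOpen K NC
  | _, _, .nil _, _, _ => trivial
  | _, _, .cons _ (.nil _), _, _ => trivial
  | _, _, .cons e₁ (.cons e₂ w), hf, hn => by
      refine ⟨?_, ?_, jOpen_of_allBwd (Walk.cons e₂ w) hf.2 ?_⟩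
      · intro h
        exact absurd h.1 hf.1
      · intro _
        exact hn _ (by simp [internal])
      · intro v hv
        exact hn v (by simp [internal]; exact Or.inr hv)

lemma lastHead_of_allFwd : ∀ {a b : V} (w : D.Walk a b), w.AllFwd → 0 < w.length →
    w.lastHead
  | _, _, .nil _, _, hp => by simp [length] at hp
  | _, _, .cons e (.nil _), hf, _ => hf.1
  | _, _, .cons e (.cons e' w), hf, _ =>
      lastHead_of_allFwd (Walk.cons e' w) hf.2 (by simp [length])

lemma not_firstNeckL_of_allFwd {a b : V} (w : D.Walk a b) (hf : w.AllFwd)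
    (hp : 0 < w.length) : ¬ w.firstNeckL := by
  cases w with
  | nil => simp [length] at hp
  | cons e w' => exact e.not_neckLeft_of_headRight_s14 hf.1

lemma not_lastNeck_of_allBwd : ∀ {a b : V} (w : D.Walk a b), w.AllBwd → 0 < w.length →
    ¬ w.lastNeck
  | _, _, .nil _, _, hp => by simp [length] at hp
  | _, _, .cons e (.nil _), hf, _ => hf.1
  | _, _, .cons e (.cons e' w), hf, _ =>
      not_lastNeck_of_allBwd (Walk.cons e' w) hf.2 (by simp [length])

end Walk

/-- a forward chain realizing a directed path, plus a final arrow. -/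
lemma exists_fwdWalk {m α β : V} (hp : D.anc m α) (h : D.dir α β) :
    ∃ F : D.Walk m β, F.AllFwd ∧ 0 < F.length ∧ ∀ v ∈ F.internal, D.anc m v := by
  induction hp using Relation.ReflTransGen.head_induction_on with
  | refl =>
      exact ⟨.cons (.fwd h) (.nil β), ⟨trivial, trivial⟩, by simp [Walk.length],
        by simp [Walk.internal]⟩
  | head hstep _ ih =>
      rename_i x z _
      obtain ⟨F, hF, hpos, hint⟩ := ih
      refine ⟨.cons (.fwd hstep) F, ⟨trivial, hF⟩, by simp [Walk.length], ?_⟩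
      intro v hv
      cases F with
      | nil => simp [Walk.internal] at hv
      | cons e F' =>
          simp [Walk.internal] at hv
          rcases hv with rfl | hv
          · exact Relation.ReflTransGen.single hstep
          · exact (Relation.ReflTransGen.single hstep).trans (hint v (by simp [Walk.internal, hv]))

/-- a backward chain realizing a reversed directed path. -/
lemma exists_bwdWalk {x t : V} (hp : D.anc x t) :
    ∃ R : D.Walk t x, R.AllBwd ∧ ∀ v ∈ R.internal, D.anc x v := by
  induction hp with
  | refl => exact ⟨.nil x, trivial, by simp [Walk.internal]⟩
  | tail hxz hstep ih =>
      rename_i z t'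
      obtain ⟨R, hR, hint⟩ := ih
      refine ⟨.cons (.bwd hstep) R, ⟨by simp [Edge.neckRight], hR⟩, ?_⟩
      intro v hv
      cases R with
      | nil => simp [Walk.internal] at hv
      | cons e R' =>
          simp [Walk.internal] at hv
          rcases hv with rfl | hv
          · exact hxz
          · exact hint v (by simp [Walk.internal, hv])

end CDG
namespace CDG
variable {W : Type} {G : CDG W}

lemma toChain {S : Set W} :
    ∀ {x y : W} (w : G.Walk x y), w.jOpen (fun _ _ => True) S → y ∉ S →
    ∀ (z : W) (p : G.Walk z x), p.allColliders →
    (match w with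
     | .nil _ => True
     | .cons e _ => p.length = 0 ∨ (p.lastNeck ∧ e.neckLeft)) →
    Relation.ReflTransGen (fun u v => augAdj G u v ∧ v ∉ S) z y
  | _, y, .nil _, _, hy, z, p, hpc, _ => by
      by_cases hz : z = y
      · subst hz; exact .refl
      · refine Relation.ReflTransGen.single ⟨⟨hz, p, ?_, hpc⟩, hy⟩
        exact Nat.pos_of_ne_zero fun h => hz (p.eq_of_length_eq_zero h)
  | _, y, .cons e (.nil _), hopen, hy, z, p, hpc, hcompat => by
      have hpc' : (p.snoc e).allColliders := p.allColliders_snoc e hpc hcompat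
      by_cases hz : z = y
      · subst hz; exact .refl
      · exact Relation.ReflTransGen.single
          ⟨⟨hz, p.snoc e, p.length_snoc_pos e, hpc'⟩, hy⟩
  | _, y, .cons (m := m) e (.cons e₂ w''), hopen, hy, z, p, hpc, hcompat => by
      have hpc' : (p.snoc e).allColliders := p.allColliders_snoc e hpc hcompat
      by_cases hc : e.neckRight ∧ e₂.neckLeft
      · exact toChain (Walk.cons e₂ w'') hopen.2.2 hy z (p.snoc e) hpc'
          (Or.inr ⟨(p.lastNeck_snoc e).2 hc.1, hc.2⟩)
      · have hm : m ∉ S := hopen.2.1 hc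
        have tailChain := toChain (Walk.cons e₂ w'') hopen.2.2 hy m (Walk.nil m)
          trivial (Or.inl rfl)
        by_cases hz : z = m
        · subst hz; exact tailChain
        · exact Relation.ReflTransGen.head
            ⟨⟨hz, p.snoc e, p.length_snoc_pos e, hpc'⟩, hm⟩ tailChain

end CDG
namespace CDG
section Stmt14
variable {V : Type} (D : CDG V) (A B C : Set V)

/-- the ancestor set of `A ∪ Bᵖ ∪ C` in `D(B)`. -/
def An : Set (V ⊕ V) :=
  (D.proxy B).ancSet (Sum.inl '' A ∪ Sum.inr '' B ∪ Sum.inl '' C)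

/-- the induced subgraph of `D(B)` on `An`. -/
def Dind : CDG (V ⊕ V) := (D.proxy B).induce (An D A B C)

/-- permissible collider contexts during the surgery argument. -/
def KK : Prop → V → Prop := fun hr m =>
  m ∈ D.ancSet C ∨ (∃ a' ∈ A, D.anc m a') ∨
  (∃ α β', β' ∈ B ∧ D.anc m α ∧ D.dir α β') ∨ (m ∈ B ∧ hr)

/-- permissible start nodes for the surgery argument. -/
def StartOK (x : V) : Prop :=
  x ∉ C ∧ (x ∈ A ∨ (x ∉ D.ancSet C ∧ ∃ a' ∈ A, D.anc x a'))

variable {D A B C}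

lemma KK_iff {p q : Prop} {m : V} (h : p ↔ q) (hk : KK D A B C q m) :
    KK D A B C p m := by
  rcases hk with h1 | h1 | h1 | ⟨h1, h2⟩
  · exact Or.inl h1
  · exact Or.inr (Or.inl h1)
  · exact Or.inr (Or.inr (Or.inl h1))
  · exact Or.inr (Or.inr (Or.inr ⟨h1, h.mpr h2⟩))

lemma FIN {x b' : V} (hb' : b' ∈ B) (P : D.Walk x b')
    (hP : P.jOpen (fun _ m => m ∈ D.ancSet C) C) (hpos : 0 < P.length)
    (hlh : P.lastHead) (hs : StartOK D A C x) :
    ∃ a' ∈ A, ∃ b'' ∈ B, D.muConn C a' b'' := by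
  rcases hs with ⟨hxC, hxA | ⟨hxnC, a', ha'A, hanc⟩⟩
  · exact ⟨x, hxA, b', hb', hxC, P, P.mOpen_of_jOpen hP, hlh⟩
  · obtain ⟨R, hR, hint⟩ := exists_bwdWalk hanc
    have ha'C : a' ∉ C := fun h => hxnC ⟨a', h, hanc⟩
    refine ⟨a', ha'A, b', hb', ha'C, R.append P, ?_, ?_⟩
    · refine (R.append P).mOpen_of_jOpen
        (Walk.jOpen_append R P
          (Walk.jOpen_of_allBwd R hR fun v hv hvC => hxnC ⟨v, hvC, hint v hv⟩)
          hP ?_)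
      intro hr _
      refine ⟨fun h => absurd h.1 (Walk.not_lastNeck_of_allBwd R hR hr),
        fun _ hxCC => hxnC ⟨x, hxCC, Relation.ReflTransGen.refl⟩⟩
    · exact Walk.lastHead_append R P hpos hlh

lemma surgery :
    ∀ {m b' : V} (w : D.Walk m b'), b' ∈ B → w.jOpen (KK D A B C) C →
    ∀ (x : V) (P : D.Walk x m), P.jOpen (fun _ mm => mm ∈ D.ancSet C) C →
    0 < P.length → StartOK D A C x →
    (w.length = 0 → P.lastHead) → (0 < w.length → w.lastHead) →
    (∀ _ : 0 < w.length,
      ((P.lastNeck ∧ w.firstNeckL) → KK D A B C P.lastHead m) ∧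
      (¬ (P.lastNeck ∧ w.firstNeckL) → m ∉ C)) →
    ∃ a' ∈ A, ∃ b'' ∈ B, D.muConn C a' b''
  | _, b', .nil _, hb', _, x, P, hP, hpos, hs, hlh0, _, _ =>
      FIN hb' P hP hpos (hlh0 rfl) hs
  | m, b', .cons (m := n) e w', hb', hGI, x, P, hP, hpos, hs, hlh0, hlh1, hJ => by
      have hwpos : 0 < (Walk.cons e w').length := by simp [Walk.length]
      have hJ' := hJ hwpos
      have absorb :
          (((P.lastNeck ∧ e.neckLeft) → m ∈ D.ancSet C) ∧
           ((¬ (P.lastNeck ∧ e.neckLeft)) → m ∉ C)) →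
          ∃ a' ∈ A, ∃ b'' ∈ B, D.muConn C a' b'' := by
        intro g
        have hP' : (P.snoc e).jOpen (fun _ mm => mm ∈ D.ancSet C) C :=
          Walk.jOpen_append P (.cons e (.nil _)) hP trivial (fun _ _ => g)
        cases w' with
        | nil =>
            exact FIN hb' (P.snoc e) hP' (P.length_snoc_pos e)
              ((P.lastHead_snoc e).2 (hlh1 hwpos)) hs
        | cons e₂ w'' =>
            refine surgery (.cons e₂ w'') hb' (Walk.jOpen_tail e _ hGI) x (P.snoc e)
              hP' (P.length_snoc_pos e) hs ?_ ?_ ?_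
            · intro h; simp [Walk.length] at h
            · exact fun _ => hlh1 hwpos
            · intro _
              refine ⟨?_, ?_⟩
              · intro h
                exact KK_iff (P.lastHead_snoc e)
                  (hGI.1 ⟨(P.lastNeck_snoc e).1 h.1, h.2⟩)
              · intro hn
                exact hGI.2.1 fun hh => hn ⟨(P.lastNeck_snoc e).2 hh.1, hh.2⟩
      by_cases hc : P.lastNeck ∧ e.neckLeft
      · by_cases hmC : m ∈ D.ancSet C
        · exact absorb ⟨fun _ => hmC, fun hn => absurd hc hn⟩
        · rcases hJ'.1 hc with hmC' | ⟨a', ha'A, hanc⟩ | ⟨α, β', hβ'B, hanc, hdir⟩ |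
            ⟨hmB, hPl⟩
          · exact absurd hmC' hmC
          · -- restart from m, which is an ancestor of A avoiding an(C)
            have hsm : StartOK D A C m :=
              ⟨fun hmCC => hmC ⟨m, hmCC, Relation.ReflTransGen.refl⟩,
               Or.inr ⟨hmC, a', ha'A, hanc⟩⟩
            cases w' with
            | nil =>
                exact FIN hb' (.cons e (.nil _)) trivial (by simp [Walk.length])
                  (hlh1 hwpos) hsm
            | cons e₂ w'' =>
                refine surgery (.cons e₂ w'') hb' (Walk.jOpen_tail e _ hGI) m
                  (.cons e (.nil _)) trivial (by simp [Walk.length]) hsm ?_ ?_ ?_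
                · intro h; simp [Walk.length] at h
                · exact fun _ => hlh1 hwpos
                · exact fun _ => ⟨hGI.1, hGI.2.1⟩
          · -- m has a directed path into B: reroute the tail forwards
            obtain ⟨F, hF, hFpos, hint⟩ := exists_fwdWalk hanc hdir
            have hWO : (P.append F).jOpen (fun _ mm => mm ∈ D.ancSet C) C := by
              refine Walk.jOpen_append P F hP
                (Walk.jOpen_of_allFwd F hF fun v hv hvC => hmC ⟨v, hvC, hint v hv⟩) ?_
              intro _ _
              exact ⟨fun h => absurd h.2 (Walk.not_firstNeckL_of_allFwd F hF hFpos),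
                fun _ hmCC => hmC ⟨m, hmCC, Relation.ReflTransGen.refl⟩⟩
            refine FIN hβ'B (P.append F) hWO ?_ ?_ hs
            · rw [Walk.length_append]; omega
            · exact Walk.lastHead_append P F hFpos (Walk.lastHead_of_allFwd F hF hFpos)
          · -- m itself is in B with an arrowhead: truncate
            exact FIN hmB P hP hpos hPl hs
      · have hmnotC : m ∉ C := hJ'.2 hc
        exact absorb ⟨fun h => absurd h hc, fun _ => hmnotC⟩

end Stmt14
end CDG
namespace CDG
section Stmt14b
variable {V : Type} {D : CDG V} {A B C : Set V}

lemma proxy_rtg : ∀ {v : V} {t : V ⊕ V},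
    Relation.ReflTransGen (D.proxy B).dir (Sum.inl v) t →
    (∃ u, t = Sum.inl u ∧ D.anc v u) ∨
    (∃ β α, t = Sum.inr β ∧ β ∈ B ∧ D.anc v α ∧ D.dir α β) := by
  intro v t h
  induction h with
  | refl => exact Or.inl ⟨v, rfl, Relation.ReflTransGen.refl⟩
  | tail _ hstep ih =>
      rename_i t' t hh
      rcases ih with ⟨u, rfl, hanc⟩ | ⟨β, α, rfl, _, _, _⟩
      · cases t with
        | inl u₂ => exact Or.inl ⟨u₂, rfl, hanc.tail hstep⟩
        | inr β => exact Or.inr ⟨β, u, rfl, hstep.1, hanc, hstep.2⟩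
      · cases t with
        | inl u₂ => exact hstep.elim
        | inr β₂ => exact hstep.elim

lemma An_inl {v : V} (hv : Sum.inl v ∈ An D A B C) :
    v ∈ D.ancSet C ∨ (∃ a' ∈ A, D.anc v a') ∨
    ∃ α β', β' ∈ B ∧ D.anc v α ∧ D.dir α β' := by
  obtain ⟨t, ht, hrtg⟩ := hv
  rcases proxy_rtg hrtg with ⟨u, rfl, hanc⟩ | ⟨β, α, rfl, hβ, hanc, hdir⟩
  · rcases ht with (⟨a', ha', h⟩ | ⟨b', hb', h⟩) | ⟨c', hc', h⟩
    · exact Or.inr (Or.inl ⟨u, Sum.inl.inj h ▸ ha', hanc⟩)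
    · simp at h
    · exact Or.inl ⟨u, Sum.inl.inj h ▸ hc', hanc⟩
  · exact Or.inr (Or.inr ⟨α, β, hβ, hanc, hdir⟩)

lemma KK_of_An {v : V} {hr : Prop} (h : Sum.inl v ∈ An D A B C) : KK D A B C hr v := by
  rcases An_inl h with h1 | h1 | h1
  · exact Or.inl h1
  · exact Or.inr (Or.inl h1)
  · exact Or.inr (Or.inr (Or.inl h1))

/-- project a walk in `D(B)` (restricted to `An`) back to `D`. -/
def projEdge : ∀ {u v : V ⊕ V}, (Dind D A B C).Edge u v →
    D.Edge (Sum.elim id id u) (Sum.elim id id v)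
  | .inl _, .inl _, .fwd h => .fwd h.1
  | .inl _, .inr _, .fwd h => .fwd h.1.2
  | .inr _, .inl _, .fwd h => h.1.elim
  | .inr _, .inr _, .fwd h => h.1.elim
  | .inl _, .inl _, .bwd h => .bwd h.1
  | .inr _, .inl _, .bwd h => .bwd h.1.2
  | .inl _, .inr _, .bwd h => h.1.elim
  | .inr _, .inr _, .bwd h => h.1.elim
  | .inl _, .inl _, .bl h => .bl h.1
  | .inl _, .inr _, .bl h => h.1.elim
  | .inr _, .inl _, .bl h => h.1.elim
  | .inr _, .inr _, .bl h => h.1.elim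

lemma projEdge_neckR : ∀ {u v : V ⊕ V} (e : (Dind D A B C).Edge u v),
    (projEdge e).neckRight ↔ e.neckRight
  | .inl _, .inl _, .fwd h => Iff.rfl
  | .inl _, .inr _, .fwd h => Iff.rfl
  | .inr _, .inl _, .fwd h => h.1.elim
  | .inr _, .inr _, .fwd h => h.1.elim
  | .inl _, .inl _, .bwd h => Iff.rfl
  | .inr _, .inl _, .bwd h => Iff.rfl
  | .inl _, .inr _, .bwd h => h.1.elim
  | .inr _, .inr _, .bwd h => h.1.elim
  | .inl _, .inl _, .bl h => Iff.rfl
  | .inl _, .inr _, .bl h => h.1.elim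
  | .inr _, .inl _, .bl h => h.1.elim
  | .inr _, .inr _, .bl h => h.1.elim

lemma projEdge_neckL : ∀ {u v : V ⊕ V} (e : (Dind D A B C).Edge u v),
    (projEdge e).neckLeft ↔ e.neckLeft
  | .inl _, .inl _, .fwd h => Iff.rfl
  | .inl _, .inr _, .fwd h => Iff.rfl
  | .inr _, .inl _, .fwd h => h.1.elim
  | .inr _, .inr _, .fwd h => h.1.elim
  | .inl _, .inl _, .bwd h => Iff.rfl
  | .inr _, .inl _, .bwd h => Iff.rfl
  | .inl _, .inr _, .bwd h => h.1.elim
  | .inr _, .inr _, .bwd h => h.1.elim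
  | .inl _, .inl _, .bl h => Iff.rfl
  | .inl _, .inr _, .bl h => h.1.elim
  | .inr _, .inl _, .bl h => h.1.elim
  | .inr _, .inr _, .bl h => h.1.elim

lemma projEdge_headR : ∀ {u v : V ⊕ V} (e : (Dind D A B C).Edge u v),
    (projEdge e).headRight ↔ e.headRight
  | .inl _, .inl _, .fwd h => Iff.rfl
  | .inl _, .inr _, .fwd h => Iff.rfl
  | .inr _, .inl _, .fwd h => h.1.elim
  | .inr _, .inr _, .fwd h => h.1.elim
  | .inl _, .inl _, .bwd h => Iff.rfl
  | .inr _, .inl _, .bwd h => Iff.rfl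
  | .inl _, .inr _, .bwd h => h.1.elim
  | .inr _, .inr _, .bwd h => h.1.elim
  | .inl _, .inl _, .bl h => Iff.rfl
  | .inl _, .inr _, .bl h => h.1.elim
  | .inr _, .inl _, .bl h => h.1.elim
  | .inr _, .inr _, .bl h => h.1.elim

def projWalk : ∀ {u v : V ⊕ V}, (Dind D A B C).Walk u v →
    D.Walk (Sum.elim id id u) (Sum.elim id id v)
  | _, _, .nil u => .nil (Sum.elim id id u)
  | _, _, .cons e w => .cons (projEdge e) (projWalk w)

lemma length_proj : ∀ {u v : V ⊕ V} (w : (Dind D A B C).Walk u v),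
    (projWalk w).length = w.length
  | _, _, .nil _ => rfl
  | _, _, .cons e w => by simp [projWalk, Walk.length, length_proj w]

lemma edge_mem : ∀ {u v : V ⊕ V} (e : (Dind D A B C).Edge u v),
    u ∈ An D A B C ∧ v ∈ An D A B C
  | _, _, .fwd h => ⟨h.2.1, h.2.2⟩
  | _, _, .bwd h => ⟨h.2.2, h.2.1⟩
  | _, _, .bl h => ⟨h.2.1, h.2.2⟩

lemma edge_to_inr : ∀ {u : V ⊕ V} {β : V} (e : (Dind D A B C).Edge u (Sum.inr β)),
    e.headRight ∧ β ∈ B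
  | .inl _, _, .fwd h => ⟨trivial, h.1.1⟩
  | .inr _, _, .fwd h => h.1.elim
  | .inl _, _, .bwd h => h.1.elim
  | .inr _, _, .bwd h => h.1.elim
  | .inl _, _, .bl h => h.1.elim
  | .inr _, _, .bl h => h.1.elim

lemma edge_from_inr : ∀ {β : V} {v : V ⊕ V} (e : (Dind D A B C).Edge (Sum.inr β) v),
    e.neckLeft
  | _, .inl _, .fwd h => h.1.elim
  | _, .inr _, .fwd h => h.1.elim
  | _, _, .bwd _ => trivial
  | _, .inl _, .bl h => h.1.elim
  | _, .inr _, .bl h => h.1.elim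

lemma end_inr : ∀ {p : V ⊕ V} {β : V} (u : (Dind D A B C).Walk p (Sum.inr β)),
    0 < u.length → β ∈ B ∧ (projWalk u).lastHead
  | _, _, .nil _, hp => by simp [Walk.length] at hp
  | _, _, .cons e (.nil _), _ =>
      ⟨(edge_to_inr e).2, (projEdge_headR e).2 (edge_to_inr e).1⟩
  | _, _, .cons e (.cons e₂ u'), _ => by
      have := end_inr (Walk.cons e₂ u') (by simp [Walk.length])
      exact ⟨this.1, this.2⟩

lemma end_mem : ∀ {p q : V ⊕ V} (u : (Dind D A B C).Walk p q),
    0 < u.length → q ∈ An D A B C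
  | _, _, .nil _, hp => by simp [Walk.length] at hp
  | _, _, .cons e (.nil _), _ => (edge_mem e).2
  | _, _, .cons _ (.cons e₂ u'), _ =>
      end_mem (Walk.cons e₂ u') (by simp [Walk.length])

lemma start_inr : ∀ {β : V} {q : V ⊕ V} (u : (Dind D A B C).Walk (Sum.inr β) q),
    0 < u.length → (projWalk u).firstNeckL
  | _, _, .nil _, hp => by simp [Walk.length] at hp
  | _, _, .cons e _, _ => (projEdge_neckL e).2 (edge_from_inr e)

lemma proj_jOpen : ∀ {p q : V ⊕ V} (u : (Dind D A B C).Walk p q),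
    u.allColliders → (projWalk u).jOpen (KK D A B C) C
  | _, _, .nil _, _ => trivial
  | _, _, .cons _ (.nil _), _ => trivial
  | _, _, .cons (m := z) e₁ (.cons e₂ u'), hcol => by
      refine ⟨?_, ?_, proj_jOpen (Walk.cons e₂ u') hcol.2.2⟩
      · intro _
        cases z with
        | inl v => exact KK_of_An (edge_mem e₁).2
        | inr β =>
            exact Or.inr (Or.inr (Or.inr
              ⟨(edge_to_inr e₁).2, (projEdge_headR e₁).2 (edge_to_inr e₁).1⟩))
      · intro hn
        exact absurd ⟨(projEdge_neckR e₁).2 hcol.1, (projEdge_neckL e₂).2 hcol.2.1⟩ hn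

lemma build {b : V} :
    ∀ {z : V ⊕ V},
    Relation.ReflTransGen
      (fun u v => augAdj (Dind D A B C) u v ∧ v ∉ Sum.inl '' C) z (Sum.inr b) →
    z = Sum.inr b ∨
      ∃ w : D.Walk (Sum.elim id id z) b, w.jOpen (KK D A B C) C ∧ w.lastHead ∧
        0 < w.length ∧ ∀ β, z = Sum.inr β → w.firstNeckL := by
  intro z h
  induction h using Relation.ReflTransGen.head_induction_on with
  | refl => exact Or.inl rfl
  | @head z z₁ hstep hrtg ih =>
      obtain ⟨⟨hne, u, upos, ucol⟩, hz₁C⟩ := hstep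
      rcases ih with rfl | ⟨w₂, hw₂, hlh₂, hpos₂, hfst₂⟩
      · refine Or.inr ⟨projWalk u, proj_jOpen u ucol, (end_inr u upos).2,
          by exact upos.trans_eq (length_proj u).symm, ?_⟩
        intro β hzeq
        subst hzeq
        exact start_inr u upos
      · refine Or.inr ⟨(projWalk u).append w₂,
          Walk.jOpen_append _ _ (proj_jOpen u ucol) hw₂ ?_,
          Walk.lastHead_append _ _ hpos₂ hlh₂,
          by rw [Walk.length_append, length_proj]; omega, ?_⟩
        · intro _ _
          cases z₁ with
          | inl v =>
              refine ⟨fun _ => KK_of_An (end_mem u upos), fun _ hvC => ?_⟩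
              exact hz₁C ⟨v, hvC, rfl⟩
          | inr β =>
              refine ⟨fun _ => Or.inr (Or.inr (Or.inr
                ⟨(end_inr u upos).1, (end_inr u upos).2⟩)), fun hn => ?_⟩
              exact absurd ⟨Walk.lastNeck_of_lastHead _ (end_inr u upos).2,
                hfst₂ β rfl⟩ hn
        · intro β hzeq
          subst hzeq
          exact Walk.firstNeckL_append _ _ (by rw [length_proj]; exact upos)
            (start_inr u upos)

end Stmt14b
end CDG
namespace CDG
section Stmt14c
variable {V : Type} {D : CDG V} {A B C : Set V}

lemma liftRTG {u v : V} (h : Relation.ReflTransGen D.dir u v) :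
    Relation.ReflTransGen (D.proxy B).dir (Sum.inl u) (Sum.inl v) := by
  induction h with
  | refl => exact Relation.ReflTransGen.refl
  | tail _ hstep ih =>
      exact ih.tail (show (D.proxy B).dir (Sum.inl _) (Sum.inl _) from hstep)

lemma E3toAn {a b x : V} (ha : a ∈ A) (hb : b ∈ B)
    (h : x ∈ D.ancSet C ∨ D.anc x a ∨ ∃ α, D.anc x α ∧ D.dir α b) :
    Sum.inl x ∈ An D A B C := by
  rcases h with ⟨c, hc, hanc⟩ | h | ⟨α, h1, h2⟩
  · exact ⟨Sum.inl c, Or.inr ⟨c, hc, rfl⟩, liftRTG hanc⟩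
  · exact ⟨Sum.inl a, Or.inl (Or.inl ⟨a, ha, rfl⟩), liftRTG h⟩
  · exact ⟨Sum.inr b, Or.inl (Or.inr ⟨b, hb, rfl⟩),
      (liftRTG h1).tail (show (D.proxy B).dir (Sum.inl α) (Sum.inr b) from ⟨hb, h2⟩)⟩

lemma fwdEscape : ∀ {x b : V} (w : D.Walk x b), w.mOpen C → w.lastHead →
    (match w with | .nil _ => False | .cons e _ => e.headRight) →
    x ∈ D.ancSet C ∨ ∃ α, D.anc x α ∧ D.dir α b
  | _, _, .nil _, _, _, hf => hf.elim
  | _, _, .cons e (.nil _), _, hlh, _ =>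
      Or.inr ⟨_, Relation.ReflTransGen.refl, e.dir_of_headRight_s14 hlh⟩
  | x, b, .cons (m := m) e₁ (.cons e₂ w₂), ho, hlh, hf => by
      have hd : D.dir x m := e₁.dir_of_headRight_s14 hf
      by_cases hl : e₂.neckLeft
      · obtain ⟨c, hc, hanc⟩ := ho.1 ⟨e₁.neckRight_of_headRight hf, hl⟩
        exact Or.inl ⟨c, hc, Relation.ReflTransGen.head hd hanc⟩
      · have h₂ : e₂.headRight := e₂.headRight_of_not_neckLeft hl
        rcases fwdEscape (Walk.cons e₂ w₂) ho.2.2 hlh h₂ with ⟨c, hc, hanc⟩ |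
          ⟨α, hanc, hdir⟩
        · exact Or.inl ⟨c, hc, Relation.ReflTransGen.head hd hanc⟩
        · exact Or.inr ⟨α, Relation.ReflTransGen.head hd hanc, hdir⟩

def liftE : ∀ {u v : V}, D.Edge u v → Sum.inl u ∈ An D A B C →
    Sum.inl v ∈ An D A B C → (Dind D A B C).Edge (Sum.inl u) (Sum.inl v)
  | _, _, .fwd h, hu, hv => .fwd ⟨h, hu, hv⟩
  | _, _, .bwd h, hu, hv => .bwd ⟨h, hv, hu⟩
  | _, _, .bl h, hu, hv => .bl ⟨h, hu, hv⟩

lemma liftE_neckR : ∀ {u v : V} (e : D.Edge u v) (hu : Sum.inl u ∈ An D A B C)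
    (hv : Sum.inl v ∈ An D A B C), (liftE e hu hv).neckRight ↔ e.neckRight
  | _, _, .fwd _, _, _ => Iff.rfl
  | _, _, .bwd _, _, _ => Iff.rfl
  | _, _, .bl _, _, _ => Iff.rfl

lemma liftE_neckL : ∀ {u v : V} (e : D.Edge u v) (hu : Sum.inl u ∈ An D A B C)
    (hv : Sum.inl v ∈ An D A B C), (liftE e hu hv).neckLeft ↔ e.neckLeft
  | _, _, .fwd _, _, _ => Iff.rfl
  | _, _, .bwd _, _, _ => Iff.rfl
  | _, _, .bl _, _, _ => Iff.rfl

lemma LIFT {a b : V} (ha : a ∈ A) (hb : b ∈ B) :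
    ∀ {x : V} (w : D.Walk x b), w.mOpen C → w.lastHead →
    (x ∈ D.ancSet C ∨ D.anc x a ∨ ∃ α, D.anc x α ∧ D.dir α b) →
    ∃ w' : (Dind D A B C).Walk (Sum.inl x) (Sum.inr b),
      w'.jOpen (fun _ _ => True) (Sum.inl '' C) ∧ (w'.firstNeckL ↔ w.firstNeckL)
  | _, .nil _, _, hlh, _ => hlh.elim
  | x, .cons e (.nil _), _, hlh, hx => by
      cases e with
      | fwd hdir =>
          have hinrb : Sum.inr b ∈ An D A B C :=
            ⟨Sum.inr b, Or.inl (Or.inr ⟨b, hb, rfl⟩), Relation.ReflTransGen.refl⟩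
          exact ⟨.cons (.fwd (show (Dind D A B C).dir (Sum.inl x) (Sum.inr b) from
            ⟨⟨hb, hdir⟩, E3toAn ha hb hx, hinrb⟩)) (.nil (Sum.inr b)),
            trivial, Iff.rfl⟩
      | bwd hdir => exact hlh.elim
      | bl hbl => exact hlh.elim
  | x, .cons (m := m) e₁ (.cons e₂ w₂), ho, hlh, hx => by
      obtain ⟨hcol, hnc, hrest⟩ := ho
      have hm : m ∈ D.ancSet C ∨ D.anc m a ∨ ∃ α, D.anc m α ∧ D.dir α b := by
        by_cases hcoll : e₁.neckRight ∧ e₂.neckLeft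
        · exact Or.inl (hcol hcoll)
        · by_cases hl : e₂.neckLeft
          · have hnr : ¬ e₁.neckRight := fun h => hcoll ⟨h, hl⟩
            have hd : D.dir m x := e₁.dir_of_not_neckRight hnr
            rcases hx with ⟨c, hc, hanc⟩ | h | ⟨α, h1, h2⟩
            · exact Or.inl ⟨c, hc, Relation.ReflTransGen.head hd hanc⟩
            · exact Or.inr (Or.inl (Relation.ReflTransGen.head hd h))
            · exact Or.inr (Or.inr ⟨α, Relation.ReflTransGen.head hd h1, h2⟩)
          · have h₂ : e₂.headRight := e₂.headRight_of_not_neckLeft hl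
            rcases fwdEscape (Walk.cons e₂ w₂) hrest hlh h₂ with h | h
            · exact Or.inl h
            · exact Or.inr (Or.inr h)
      obtain ⟨w₂', hw₂o, hw₂f⟩ := LIFT ha hb (Walk.cons e₂ w₂) hrest hlh hm
      refine ⟨.cons (liftE e₁ (E3toAn ha hb hx) (E3toAn ha hb hm)) w₂', ?_, ?_⟩
      · cases w₂' with
        | cons e₂' w₂'' =>
            refine ⟨fun _ => trivial, fun hn => ?_, hw₂o⟩
            have hnc' : ¬ (e₁.neckRight ∧ e₂.neckLeft) := fun hh =>
              hn ⟨(liftE_neckR e₁ _ _).2 hh.1, hw₂f.2 hh.2⟩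
            rintro ⟨c, hcC, hEq⟩
            exact hnc hnc' (Sum.inl.inj hEq ▸ hcC)
      · exact liftE_neckL e₁ _ _

end Stmt14c
end CDG
/-- the augmentation criterion for μ-separation in cDGs. -/
theorem stmt14 {V : Type} (D : CDG V) (A B C : Set V) :
    D.muSep A B C ↔
      udSep
        (augAdj ((D.proxy B).induce
          ((D.proxy B).ancSet
            (Sum.inl '' A ∪ Sum.inr '' B ∪ Sum.inl '' C))))
        (Sum.inl '' (A \ C)) (Sum.inr '' B) (Sum.inl '' C) := by
  constructor
  · -- μ-separation implies separation in the augmented graph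
    intro hsep
    rintro ⟨x, ⟨a, ⟨haA, haC⟩, rfl⟩, hxC, y, ⟨b, hbB, rfl⟩, chain⟩
    rcases CDG.build (D := D) (A := A) (B := B) (C := C) (b := b) chain with
      h | ⟨w, hjO, hlh, hpos, -⟩
    · simp at h
    · cases w with
      | nil => exact hlh.elim
      | cons e w' =>
          cases w' with
          | nil =>
              exact hsep a haA b hbB ⟨haC, .cons e (.nil b), trivial, hlh⟩
          | cons e₂ w'' =>
              obtain ⟨a', ha'A, b', hb'B, hconn⟩ :=
                CDG.surgery (CDG.Walk.cons e₂ w'') hbB (CDG.Walk.jOpen_tail e _ hjO) a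
                  (.cons e (.nil _)) trivial (by simp [CDG.Walk.length])
                  ⟨haC, Or.inl haA⟩
                  (fun h => by simp [CDG.Walk.length] at h)
                  (fun _ => hlh) (fun _ => ⟨hjO.1, hjO.2.1⟩)
              exact hsep a' ha'A b' hb'B hconn
  · -- separation in the augmented graph implies μ-separation
    intro hud a haA b hbB hconn
    obtain ⟨haC, w, hOpen, hHead⟩ := hconn
    obtain ⟨w', hjO, -⟩ := CDG.LIFT (C := C) haA hbB w hOpen hHead
      (Or.inr (Or.inl Relation.ReflTransGen.refl))
    have chain := CDG.toChain w' hjO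
      (show Sum.inr b ∉ Sum.inl '' C by rintro ⟨c, -, h⟩; simp at h)
      (Sum.inl a) (.nil _) trivial (by cases w' <;> first | trivial | exact Or.inl rfl)
    exact hud ⟨Sum.inl a, ⟨a, ⟨haA, haC⟩, rfl⟩,
      (by rintro ⟨c, hc, h⟩; exact haC (Sum.inl.inj h ▸ hc)),
      Sum.inr b, ⟨b, hbB, rfl⟩, chain⟩
end
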